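/- In the braid group B(Ã_n), with y = σ_j ⋯ σ_2 σ_1 σ_{j+1} ⋯ σ_{n−1} σ_n a_{n+1} (2 ≤ j ≤ n−1) and a_n = σ_n a_{n+1} σ_n^{-1}, one has y^{n−j+1} = (σ_j ⋯ σ_2 σ_1 σ_{j+1} ⋯ σ_{n−1} a_n)^{n−j} · σ_j σ_{j+1} ⋯ σ_{n−1} · (σ_n σ_{n−1} ⋯ σ_2 σ_1 a_{n+1}). -/

import Mathlib

/-- The defining relators of the affine braid group of type `Ãₙ`: generators indexed by
`Fin (n+1)` arranged in a cycle; cyclically adjacent generators satisfy the braid relation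
`xyx = yxy`, all other pairs commute. -/
def affineBraidRels (n : ℕ) : Set (FreeGroup (Fin (n + 1))) :=
  { r | ∃ i j : Fin (n + 1),
      ((i - j = 1 ∨ j - i = 1) ∧
        r = FreeGroup.of i * FreeGroup.of j * FreeGroup.of i *
          (FreeGroup.of j * FreeGroup.of i * FreeGroup.of j)⁻¹) ∨
      (i ≠ j ∧ ¬(i - j = 1 ∨ j - i = 1) ∧
        r = FreeGroup.of i * FreeGroup.of j * (FreeGroup.of j * FreeGroup.of i)⁻¹) }

/-- The affine braid group `B(Ãₙ)`. -/
def AffineBraidGroup (n : ℕ) : Type := PresentedGroup (affineBraidRels n)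

instance (n : ℕ) : Group (AffineBraidGroup n) := by
  unfold AffineBraidGroup; infer_instance

/-- The generator with 1-based subscript `k`: `σ_k` for `1 ≤ k ≤ n`, and `a_{n+1}` for
`k = n + 1`. -/
def bgen (n : ℕ) (k : ℕ) : AffineBraidGroup n :=
  PresentedGroup.of (Fin.ofNat (n + 1) (k - 1))

/-- The product of the generators with the given (1-based) subscripts. -/
def bword (n : ℕ) (l : List ℕ) : AffineBraidGroup n := (l.map (bgen n)).prod

/-- The decreasing word `[i, i-1, ..., j]` of (1-based) generator subscripts. -/
def decW (i j : ℕ) : List ℕ := (List.range' j (i + 1 - j)).reverse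

/-- The increasing word `[i, i+1, ..., j]` of (1-based) generator subscripts. -/
def incW (i j : ℕ) : List ℕ := List.range' i (j + 1 - i)

namespace ABG

/-! ### list lemmas -/

lemma incW_nil {a b : ℕ} (h : b < a) : incW a b = [] := by
  unfold incW
  have : b + 1 - a = 0 := by omega
  simp [this]

lemma decW_nil {a b : ℕ} (h : a < b) : decW a b = [] := by
  unfold decW
  have : a + 1 - b = 0 := by omega
  simp [this]

lemma incW_append {a c b : ℕ} (h1 : a ≤ c + 1) (h2 : c ≤ b) :
    incW a b = incW a c ++ incW (c + 1) b := by
  unfold incW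
  have h3 : c + 1 = a + 1 * (c + 1 - a) := by omega
  have h4 : (b + 1 - (c + 1)) + (c + 1 - a) = b + 1 - a := by omega
  rw [show List.range' (c+1) (b + 1 - (c+1)) = List.range' (a + 1 * (c + 1 - a)) (b + 1 - (c+1)) by rw [← h3]]
  rw [List.range'_append]
  congr 1
  omega

lemma incW_concat {a b : ℕ} (h : a ≤ b + 1) :
    incW a (b + 1) = incW a b ++ [b + 1] := by
  unfold incW
  have h4 : b + 1 + 1 - a = (b + 1 - a) + 1 := by omega
  rw [h4, List.range'_concat]
  congr 2
  omega

lemma incW_cons {a b : ℕ} (h : a ≤ b) : incW a b = a :: incW (a + 1) b := by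
  unfold incW
  have h4 : b + 1 - a = (b + 1 - (a + 1)) + 1 := by omega
  rw [h4, List.range'_succ]

lemma incW_single (a : ℕ) : incW a a = [a] := by
  unfold incW; simp

lemma mem_incW {a b i : ℕ} (h : i ∈ incW a b) : a ≤ i ∧ i ≤ b := by
  unfold incW at h
  rcases List.mem_range'_1.1 h with ⟨h1, h2⟩
  omega

lemma decW_eq_rev {a b : ℕ} : decW a b = (incW b a).reverse := by
  unfold decW incW; rfl

lemma mem_decW {a b i : ℕ} (h : i ∈ decW a b) : b ≤ i ∧ i ≤ a := by
  rw [decW_eq_rev, List.mem_reverse] at h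
  exact mem_incW h

lemma decW_cons {a b : ℕ} (h : b ≤ a + 1) : decW (a + 1) b = (a + 1) :: decW a b := by
  rw [decW_eq_rev, decW_eq_rev, incW_concat h]
  simp

lemma decW_concat {a b : ℕ} (h : b ≤ a) : decW a b = decW a (b + 1) ++ [b] := by
  rw [decW_eq_rev, decW_eq_rev, incW_cons h]
  simp

lemma decW_append {a b c : ℕ} (h1 : b ≤ c + 1) (h2 : c ≤ a) :
    decW a b = decW a (c + 1) ++ decW c b := by
  rw [decW_eq_rev, decW_eq_rev, decW_eq_rev, incW_append h1 h2]
  simp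

lemma decW_single (a : ℕ) : decW a a = [a] := by
  rw [decW_eq_rev, incW_single]; rfl

/-! ### bword lemmas -/

lemma bword_nil (n : ℕ) : bword n [] = 1 := rfl

lemma bword_append (n : ℕ) (l1 l2 : List ℕ) :
    bword n (l1 ++ l2) = bword n l1 * bword n l2 := by
  unfold bword
  rw [List.map_append, List.prod_append]

lemma bword_cons (n : ℕ) (k : ℕ) (l : List ℕ) :
    bword n (k :: l) = bgen n k * bword n l := by
  unfold bword
  rw [List.map_cons, List.prod_cons]

lemma bword_singleton (n : ℕ) (k : ℕ) : bword n [k] = bgen n k := by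
  rw [bword_cons, bword_nil, mul_one]


/-! ### Fin arithmetic -/

lemma fin_sub_val_of_le {n a b : ℕ} (hb : b ≤ a) (ha : a ≤ n) :
    ((Fin.ofNat (n+1) a - Fin.ofNat (n+1) b : Fin (n+1))).val = a - b := by
  rw [Fin.sub_def]
  have hva : ((Fin.ofNat (n+1) a : Fin (n+1)) : ℕ) = a := by rw [Fin.val_ofNat, Nat.mod_eq_of_lt (by omega)]
  have hvb : ((Fin.ofNat (n+1) b : Fin (n+1)) : ℕ) = b := by rw [Fin.val_ofNat, Nat.mod_eq_of_lt (by omega)]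
  simp only [hva, hvb]
  have h1 : n + 1 - b + a = (n + 1) + (a - b) := by omega
  rw [h1, Nat.add_mod_left, Nat.mod_eq_of_lt (by omega)]

lemma fin_sub_val_of_lt {n a b : ℕ} (hab : a < b) (hb : b ≤ n) :
    ((Fin.ofNat (n+1) a - Fin.ofNat (n+1) b : Fin (n+1))).val = a + (n + 1) - b := by
  rw [Fin.sub_def]
  have hva : ((Fin.ofNat (n+1) a : Fin (n+1)) : ℕ) = a := by rw [Fin.val_ofNat, Nat.mod_eq_of_lt (by omega)]
  have hvb : ((Fin.ofNat (n+1) b : Fin (n+1)) : ℕ) = b := by rw [Fin.val_ofNat, Nat.mod_eq_of_lt (by omega)]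
  simp only [hva, hvb]
  have h1 : n + 1 - b + a = a + (n + 1) - b := by omega
  rw [h1, Nat.mod_eq_of_lt (by omega)]

lemma fin_val_one {n : ℕ} (hn : 1 ≤ n) : ((1 : Fin (n+1)) : ℕ) = 1 := by
  rw [Fin.val_one']
  exact Nat.mod_eq_of_lt (by omega)

/-! ### relations -/

lemma rel_eq_one {n : ℕ} {r : FreeGroup (Fin (n+1))} (h : r ∈ affineBraidRels n) :
    (QuotientGroup.mk r : PresentedGroup (affineBraidRels n)) = 1 :=
  (QuotientGroup.eq_one_iff r).2 (Subgroup.subset_normalClosure h)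

lemma braid_of {n : ℕ} (i j : Fin (n+1)) (h : i - j = 1 ∨ j - i = 1) :
    (PresentedGroup.of i * PresentedGroup.of j * PresentedGroup.of i :
        PresentedGroup (affineBraidRels n)) =
      PresentedGroup.of j * PresentedGroup.of i * PresentedGroup.of j := by
  have h1 := rel_eq_one (n := n)
    (r := FreeGroup.of i * FreeGroup.of j * FreeGroup.of i *
      (FreeGroup.of j * FreeGroup.of i * FreeGroup.of j)⁻¹)
    ⟨i, j, Or.inl ⟨h, rfl⟩⟩
  rw [QuotientGroup.mk_mul, QuotientGroup.mk_inv, QuotientGroup.mk_mul,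
    QuotientGroup.mk_mul, QuotientGroup.mk_mul, mul_inv_eq_one] at h1
  exact h1

lemma comm_of {n : ℕ} (i j : Fin (n+1)) (hne : i ≠ j) (h : ¬(i - j = 1 ∨ j - i = 1)) :
    (PresentedGroup.of i * PresentedGroup.of j :
        PresentedGroup (affineBraidRels n)) =
      PresentedGroup.of j * PresentedGroup.of i := by
  have h1 := rel_eq_one (n := n)
    (r := FreeGroup.of i * FreeGroup.of j * (FreeGroup.of j * FreeGroup.of i)⁻¹)
    ⟨i, j, Or.inr ⟨hne, h, rfl⟩⟩
  rw [QuotientGroup.mk_mul, QuotientGroup.mk_inv, QuotientGroup.mk_mul,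
    QuotientGroup.mk_mul, mul_inv_eq_one] at h1
  exact h1

/-- braid relation for consecutive generators `k`, `k+1`, `1 ≤ k ≤ n`. -/
lemma bgen_braid {n : ℕ} {k : ℕ} (h1 : 1 ≤ k) (h2 : k ≤ n) :
    bgen n k * bgen n (k+1) * bgen n k = bgen n (k+1) * bgen n k * bgen n (k+1) := by
  unfold bgen
  have hk : (k + 1 - 1 : ℕ) = k := by omega
  rw [hk]
  apply braid_of
  right
  apply Fin.ext
  rw [fin_sub_val_of_le (by omega) h2, fin_val_one (by omega)]
  omega

/-- commutation for distant generators. -/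
lemma bgen_comm {n : ℕ} {k l : ℕ} (h1 : 1 ≤ k) (h2 : k + 2 ≤ l) (h3 : l ≤ n + 1)
    (h4 : ¬(k = 1 ∧ l = n + 1)) : Commute (bgen n k) (bgen n l) := by
  unfold bgen
  have hn : 2 ≤ n := by omega
  have hkn : k - 1 ≤ n := by omega
  have hln : l - 1 ≤ n := by omega
  have hlt : k - 1 < l - 1 := by omega
  apply comm_of
  · intro he
    have := congrArg Fin.val he
    rw [Fin.val_ofNat, Fin.val_ofNat, Nat.mod_eq_of_lt (by omega), Nat.mod_eq_of_lt (by omega)] at this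
    omega
  · rintro (he | he)
    · have := congrArg Fin.val he
      rw [fin_sub_val_of_lt hlt hln, fin_val_one (by omega)] at this
      omega
    · have := congrArg Fin.val he
      rw [fin_sub_val_of_le (le_of_lt hlt) hln, fin_val_one (by omega)] at this
      omega


/-! ### commutation machinery -/

lemma comm_word_gen {n : ℕ} (l : List ℕ) (k : ℕ)
    (h : ∀ i ∈ l, Commute (bgen n i) (bgen n k)) :
    Commute (bword n l) (bgen n k) := by
  unfold bword
  apply Commute.list_prod_left
  intro x hx
  rcases List.mem_map.1 hx with ⟨i, hi, rfl⟩
  exact h i hi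

lemma comm_word_word {n : ℕ} (l1 l2 : List ℕ)
    (h : ∀ i ∈ l1, ∀ k ∈ l2, Commute (bgen n i) (bgen n k)) :
    Commute (bword n l1) (bword n l2) := by
  unfold bword
  apply Commute.list_prod_left
  intro x hx
  rcases List.mem_map.1 hx with ⟨i, hi, rfl⟩
  apply Commute.list_prod_right
  intro z hz
  rcases List.mem_map.1 hz with ⟨k, hk, rfl⟩
  exact h i hi k hk

/-- context version of `Commute`: `x * (y * c) = y * (x * c)`. -/
lemma comm3 {G : Type*} [Group G] {x y : G} (h : Commute x y) (c : G) :
    x * (y * c) = y * (x * c) := by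
  rw [← mul_assoc, h.eq, mul_assoc]

/-- generic gap commutation, symmetric closure: `Commute (bgen k) (bgen l)` whenever
`k < l`, `l - k ≥ 2`, `l ≤ n+1`, and not (`k = 1` and `l = n+1`) — in either order. -/
lemma gap {n : ℕ} {k l : ℕ} (h1 : 1 ≤ k) (h2 : k + 2 ≤ l) (h3 : l ≤ n + 1)
    (h4 : k ≠ 1 ∨ l ≠ n + 1) : Commute (bgen n k) (bgen n l) :=
  bgen_comm h1 h2 h3 (by tauto)

/-! ### slide lemmas -/

/-- `I(a,b) σ_i = σ_{i+1} I(a,b)` for `a ≤ i < b ≤ n`, `1 ≤ a`. -/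
lemma inc_slide {n a b i : ℕ} (h1 : 1 ≤ a) (ha : a ≤ i) (hib : i + 1 ≤ b) (hbn : b ≤ n) :
    bword n (incW a b) * bgen n i = bgen n (i + 1) * bword n (incW a b) := by
  have hsplit : incW a b = incW a (i-1) ++ ([i] ++ ([i+1] ++ incW (i+2) b)) := by
    have e1 : incW a b = incW a (i-1) ++ incW i b := by
      have := incW_append (a := a) (c := i-1) (b := b) (by omega) (by omega)
      rwa [show i - 1 + 1 = i by omega] at this
    have e2 : incW i b = i :: incW (i+1) b := incW_cons (by omega)
    have e3 : incW (i+1) b = (i+1) :: incW (i+2) b := incW_cons (by omega)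
    rw [e1, e2, e3]; rfl
  have hc2 : Commute (bgen n i) (bword n (incW (i+2) b)) := by
    apply (comm_word_gen _ _ ?_).symm
    intro t ht
    rcases mem_incW ht with ⟨ht1, ht2⟩
    exact (gap (by omega) (by omega) (by omega) (by omega)).symm
  have hc1 : Commute (bgen n (i+1)) (bword n (incW a (i-1))) := by
    apply (comm_word_gen _ _ ?_).symm
    intro t ht
    rcases mem_incW ht with ⟨ht1, ht2⟩
    exact gap (by omega) (by omega) (by omega) (by omega)
  rw [hsplit]
  rw [bword_append, bword_append, bword_append, bword_singleton, bword_singleton]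
  calc bword n (incW a (i-1)) * (bgen n i * (bgen n (i+1) * bword n (incW (i+2) b))) * bgen n i
      = bword n (incW a (i-1)) * (bgen n i * (bgen n (i+1) * (bword n (incW (i+2) b) * bgen n i))) := by
        simp only [mul_assoc]
    _ = bword n (incW a (i-1)) * (bgen n i * (bgen n (i+1) * (bgen n i * bword n (incW (i+2) b)))) := by
        rw [hc2.eq]
    _ = bword n (incW a (i-1)) * (bgen n (i+1) * (bgen n i * (bgen n (i+1) * bword n (incW (i+2) b)))) := by
        have hb := bgen_braid (n := n) (k := i) (by omega) (by omega)
        simp only [← mul_assoc]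
        rw [show bword n (incW a (i-1)) * bgen n i * bgen n (i+1) * bgen n i
            = bword n (incW a (i-1)) * (bgen n i * bgen n (i+1) * bgen n i) by simp only [mul_assoc], hb]
        simp only [mul_assoc]
    _ = bgen n (i+1) * (bword n (incW a (i-1)) * (bgen n i * (bgen n (i+1) * bword n (incW (i+2) b)))) := by
        rw [← mul_assoc, ← hc1.eq, mul_assoc]

/-- `I(a,b) ⋅ D(b-1,q) = D(b,q+1) ⋅ I(a,b)` for `1 ≤ a ≤ q ≤ b ≤ n`. -/
lemma slide_dec {n a b : ℕ} (q : ℕ) (h1 : 1 ≤ a) (haq : a ≤ q) (hq : q ≤ b) (hb : b ≤ n) :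
    bword n (incW a b) * bword n (decW (b-1) q) =
      bword n (decW b (q+1)) * bword n (incW a b) := by
  induction' hd : b - q with d ih generalizing q
  case zero =>
    have hqb : q = b := by omega
    subst hqb
    rw [decW_nil (by omega), decW_nil (by omega), bword_nil, mul_one, one_mul]
  case succ =>
    have hqb : q + 1 ≤ b := by omega
    have e1 : decW (b-1) q = decW (b-1) (q+1) ++ [q] := decW_concat (by omega)
    have e2 : decW b (q+1) = decW b (q+2) ++ [q+1] := decW_concat (by omega)
    rw [e1, bword_append, bword_singleton, ← mul_assoc, ih (q+1) (by omega) hqb (by omega),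
      mul_assoc, inc_slide h1 haq hqb hb, ← mul_assoc, e2, bword_append, bword_singleton]

/-- `D(c,d) ⋅ I(c+1,b) = I(c,b) ⋅ D(c-1,d)` for `1 ≤ d ≤ c ≤ b ≤ n+1`-ish (pure commutation). -/
lemma dec_inc {n c d b : ℕ} (hd : 1 ≤ d) (hdc : d ≤ c) (hcb : c ≤ b) (hbn : b ≤ n) :
    bword n (decW c d) * bword n (incW (c+1) b) =
      bword n (incW c b) * bword n (decW (c-1) d) := by
  have e1 : decW c d = c :: decW (c-1) d := by
    have := decW_cons (a := c - 1) (b := d) (by omega)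
    rwa [show c - 1 + 1 = c by omega] at this
  have e2 : incW c b = c :: incW (c+1) b := incW_cons (by omega)
  have hc : Commute (bword n (decW (c-1) d)) (bword n (incW (c+1) b)) := by
    apply comm_word_word
    intro s hs t ht
    rcases mem_decW hs with ⟨hs1, hs2⟩
    rcases mem_incW ht with ⟨ht1, ht2⟩
    exact gap (by omega) (by omega) (by omega) (by right; omega)
  rw [e1, e2, bword_cons, bword_cons, mul_assoc, hc.eq, ← mul_assoc]

/-- context version of a rewriting equation. -/
lemma ctx {G : Type*} [Group G] {X Y Z W : G} (e : X * Y = Z * W) (c : G) :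
    X * (Y * c) = Z * (W * c) := by rw [← mul_assoc, e, mul_assoc]

/-- The core positive-braid identity `G`. -/
lemma lemG {n j q : ℕ} (hj : 2 ≤ j) (hq : j + 1 ≤ q) (hqn : q ≤ n)
    (c : AffineBraidGroup n) :
    bword n (incW j n) * (bword n (decW (n-1) q) * (bword n (decW (j-1) 1) *
      (bword n (decW j 2) * (bword n (incW (j+1) (n-1)) * c)))) =
    bword n (decW j 1) * (bword n (incW (j+1) n) * (bword n (incW j (n-1)) *
      (bword n (decW (n-2) (q-1)) * (bword n (decW (j-1) 2) * c)))) := by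
  have s1 : bword n (incW j n) * bword n (decW (n-1) q) =
      bword n (decW n (q+1)) * bword n (incW j n) :=
    slide_dec q (by omega) (by omega) (by omega) (by omega)
  have s2 : bword n (decW j 2) * bword n (incW (j+1) (n-1)) =
      bword n (incW j (n-1)) * bword n (decW (j-1) 2) :=
    dec_inc (by omega) hj (by omega) (by omega)
  have s3 : bword n (incW j (n-1)) * bword n (decW (n-2) (q-1)) =
      bword n (decW (n-1) q) * bword n (incW j (n-1)) := by
    have := slide_dec (n := n) (a := j) (b := n-1) (q-1) (by omega) (by omega) (by omega)
      (by omega)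
    rwa [show n-1-1 = n-2 by omega, show q-1+1 = q by omega] at this
  have s4 : bword n (incW (j+1) n) * bword n (decW (n-1) q) =
      bword n (decW n (q+1)) * bword n (incW (j+1) n) :=
    slide_dec q (by omega) (by omega) (by omega) (by omega)
  have s5 : Commute (bword n (decW j 1)) (bword n (decW n (q+1))) := by
    apply comm_word_word
    intro s hs t ht
    rcases mem_decW hs with ⟨hs1, hs2⟩
    rcases mem_decW ht with ⟨ht1, ht2⟩
    exact gap (by omega) (by omega) (by omega) (by right; omega)
  have s6 : bword n (decW j 1) * bword n (incW (j+1) n) =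
      bword n (incW j n) * bword n (decW (j-1) 1) :=
    dec_inc (by omega) (by omega) (by omega) (by omega)
  conv_lhs => rw [ctx s1]
  conv_lhs => rw [ctx s2]
  conv_rhs => rw [ctx s3, ctx s4, comm3 s5, ctx s6]

/-- The key step: `U_k · y = (y σₙ⁻¹) · U_{k+1}` with `q = n - k`. -/
lemma key {n j q : ℕ} (hj : 2 ≤ j) (hq : j + 1 ≤ q) (hqn : q ≤ n) :
    bword n (incW j n ++ decW (n-1) q ++ decW (j-1) 1 ++ [n+1]) *
      bword n (decW j 1 ++ incW (j+1) n ++ [n+1]) =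
    (bword n (decW j 1 ++ incW (j+1) n ++ [n+1]) * (bgen n n)⁻¹) *
      bword n (incW j n ++ decW (n-1) (q-1) ++ decW (j-1) 1 ++ [n+1]) := by
  have hn3 : 3 ≤ n := by omega
  -- commutation facts
  have hADj2 : Commute (bgen n (n+1)) (bword n (decW j 2)) := by
    refine (comm_word_gen _ _ fun t ht => ?_).symm
    rcases mem_decW ht with ⟨h1, h2⟩
    exact gap (by omega) (by omega) (by omega) (Or.inl (by omega))
  have hg1I : Commute (bgen n 1) (bword n (incW (j+1) n)) := by
    refine (comm_word_gen _ _ fun t ht => ?_).symm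
    rcases mem_incW ht with ⟨h1, h2⟩
    exact (gap (by omega) (by omega) (by omega) (Or.inr (by omega))).symm
  have hAIj1n1 : Commute (bgen n (n+1)) (bword n (incW (j+1) (n-1))) := by
    refine (comm_word_gen _ _ fun t ht => ?_).symm
    rcases mem_incW ht with ⟨h1, h2⟩
    exact gap (by omega) (by omega) (by omega) (Or.inl (by omega))
  have hInvIjn2 : Commute ((bgen n n)⁻¹) (bword n (incW j (n-2))) := by
    refine Commute.inv_left ((comm_word_gen _ _ fun t ht => ?_).symm)
    rcases mem_incW ht with ⟨h1, h2⟩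
    exact gap (by omega) (by omega) (by omega) (Or.inr (by omega))
  have hgnDq : Commute (bgen n n) (bword n (decW (n-2) (q-1))) := by
    refine (comm_word_gen _ _ fun t ht => ?_).symm
    rcases mem_decW ht with ⟨h1, h2⟩
    exact gap (by omega) (by omega) (by omega) (Or.inr (by omega))
  have hgnDj12 : Commute (bgen n n) (bword n (decW (j-1) 2)) := by
    refine (comm_word_gen _ _ fun t ht => ?_).symm
    rcases mem_decW ht with ⟨h1, h2⟩
    exact gap (by omega) (by omega) (by omega) (Or.inr (by omega))
  have hAIjn2 : Commute (bgen n (n+1)) (bword n (incW j (n-2))) := by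
    refine (comm_word_gen _ _ fun t ht => ?_).symm
    rcases mem_incW ht with ⟨h1, h2⟩
    exact gap (by omega) (by omega) (by omega) (Or.inl (by omega))
  have hAgn1 : Commute (bgen n (n+1)) (bgen n (n-1)) :=
    (gap (by omega) (by omega) (by omega) (Or.inl (by omega))).symm
  have hADq : Commute (bgen n (n+1)) (bword n (decW (n-2) (q-1))) := by
    refine (comm_word_gen _ _ fun t ht => ?_).symm
    rcases mem_decW ht with ⟨h1, h2⟩
    exact gap (by omega) (by omega) (by omega) (Or.inl (by omega))
  have hADj12 : Commute (bgen n (n+1)) (bword n (decW (j-1) 2)) := by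
    refine (comm_word_gen _ _ fun t ht => ?_).symm
    rcases mem_decW ht with ⟨h1, h2⟩
    exact gap (by omega) (by omega) (by omega) (Or.inl (by omega))
  -- word expansions
  have eDj1 : bword n (decW j 1) = bword n (decW j 2) * bgen n 1 := by
    rw [decW_concat (by omega), bword_append, bword_singleton]
  have eIj1n : bword n (incW (j+1) n) =
      bword n (incW (j+1) (n-1)) * bgen n n := by
    have e1 : incW (j+1) n = incW (j+1) (n-1) ++ incW (n-1+1) n :=
      incW_append (by omega) (by omega)
    rw [show n-1+1 = n by omega] at e1
    rw [e1, incW_single, bword_append, bword_singleton]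
  have eIjn : bword n (incW j n) =
      bword n (incW j (n-2)) * (bgen n (n-1) * bgen n n) := by
    have e1 : incW j n = incW j (n-2) ++ incW (n-1) n := by
      have := incW_append (a := j) (c := n-2) (b := n) (by omega) (by omega)
      rwa [show n-2+1 = n-1 by omega] at this
    have e2 : incW (n-1) n = (n-1) :: incW n n := by
      have := incW_cons (a := n-1) (b := n) (by omega)
      rwa [show n-1+1 = n by omega] at this
    rw [e1, e2, incW_single, bword_append, bword_cons, bword_singleton]
  have eDq1 : bword n (decW (n-1) (q-1)) =
      bgen n (n-1) * bword n (decW (n-2) (q-1)) := by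
    have := decW_cons (a := n-2) (b := q-1) (by omega)
    rw [show n-2+1 = n-1 by omega] at this
    rw [this, bword_cons]
  have eDj1' : bword n (decW (j-1) 1) = bword n (decW (j-1) 2) * bgen n 1 := by
    rw [decW_concat (by omega), bword_append, bword_singleton]
  have eIjn1 : bword n (incW j (n-1)) =
      bword n (incW j (n-2)) * bgen n (n-1) := by
    have e1 : incW j (n-1) = incW j (n-2) ++ incW (n-2+1) (n-1) :=
      incW_append (by omega) (by omega)
    rw [show n-2+1 = n-1 by omega] at e1
    rw [e1, incW_single, bword_append, bword_singleton]
  -- braid step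
  have hbraid : bgen n (n-1) * bgen n n * bgen n (n-1) =
      bgen n n * bgen n (n-1) * bgen n n := by
    have := bgen_braid (n := n) (k := n-1) (by omega) (by omega)
    rwa [show n-1+1 = n by omega] at this
  have hbr : ∀ c : AffineBraidGroup n,
      (bgen n n)⁻¹ * (bgen n (n-1) * (bgen n n * c)) =
        bgen n (n-1) * (bgen n n * ((bgen n (n-1))⁻¹ * c)) := by
    intro c
    have h2 : (bgen n n)⁻¹ * (bgen n (n-1) * bgen n n) =
        bgen n (n-1) * bgen n n * (bgen n (n-1))⁻¹ := by
      apply mul_right_cancel (b := bgen n (n-1))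
      calc (bgen n n)⁻¹ * (bgen n (n-1) * bgen n n) * bgen n (n-1)
          = (bgen n n)⁻¹ * (bgen n (n-1) * bgen n n * bgen n (n-1)) := by
            simp only [mul_assoc]
        _ = (bgen n n)⁻¹ * (bgen n n * (bgen n (n-1) * bgen n n)) := by
            rw [hbraid]; simp only [mul_assoc]
        _ = bgen n (n-1) * bgen n n := by rw [inv_mul_cancel_left]
        _ = bgen n (n-1) * bgen n n * (bgen n (n-1))⁻¹ * bgen n (n-1) := by
            rw [inv_mul_cancel_right]
    calc (bgen n n)⁻¹ * (bgen n (n-1) * (bgen n n * c))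
        = ((bgen n n)⁻¹ * (bgen n (n-1) * bgen n n)) * c := by simp only [mul_assoc]
      _ = (bgen n (n-1) * bgen n n * (bgen n (n-1))⁻¹) * c := by rw [h2]
      _ = bgen n (n-1) * (bgen n n * ((bgen n (n-1))⁻¹ * c)) := by simp only [mul_assoc]
  have hre : ∀ c : AffineBraidGroup n,
      bword n (incW j (n-2)) * (bgen n (n-1) * c) = bword n (incW j (n-1)) * c := by
    intro c
    rw [eIjn1, mul_assoc]
  -- the common tail
  -- transform the left-hand side
  have hL : bword n (incW j n ++ decW (n-1) q ++ decW (j-1) 1 ++ [n+1]) *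
      bword n (decW j 1 ++ incW (j+1) n ++ [n+1]) =
      bword n (incW j n) * (bword n (decW (n-1) q) * (bword n (decW (j-1) 1) *
        (bword n (decW j 2) * (bword n (incW (j+1) (n-1)) *
          (bgen n (n+1) * (bgen n n * (bgen n 1 * bgen n (n+1)))))))) := by
    simp only [bword_append, bword_singleton, mul_assoc]
    rw [eDj1]
    simp only [mul_assoc]
    rw [comm3 hADj2, comm3 hg1I, eIj1n]
    simp only [mul_assoc]
    rw [comm3 hAIj1n1]
  -- transform the right-hand side
  have hR : (bword n (decW j 1 ++ incW (j+1) n ++ [n+1]) * (bgen n n)⁻¹) *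
      bword n (incW j n ++ decW (n-1) (q-1) ++ decW (j-1) 1 ++ [n+1]) =
      bword n (decW j 1) * (bword n (incW (j+1) n) * (bword n (incW j (n-1)) *
        (bword n (decW (n-2) (q-1)) * (bword n (decW (j-1) 2) *
          (bgen n (n+1) * (bgen n n * (bgen n 1 * bgen n (n+1)))))))) := by
    simp only [bword_append, bword_singleton, mul_assoc]
    rw [eIjn]
    simp only [mul_assoc]
    rw [comm3 hInvIjn2, hbr, eDq1]
    simp only [mul_assoc]
    rw [inv_mul_cancel_left, comm3 hgnDq, eDj1']
    simp only [mul_assoc]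
    rw [comm3 hgnDj12, comm3 hAIjn2, comm3 hAgn1, comm3 hADq, comm3 hADj12, hre]
  rw [hL, hR]
  exact lemG hj hq hqn _

lemma invariant {n j : ℕ} (hj : 2 ≤ j) (hjn : j + 1 ≤ n) :
    ∀ k, k ≤ n - j →
      (bword n (decW j 1 ++ incW (j+1) n ++ [n+1]))^(k+1) =
        (bword n (decW j 1 ++ incW (j+1) n ++ [n+1]) * (bgen n n)⁻¹)^k *
          bword n (incW j n ++ decW (n-1) (n-k) ++ decW (j-1) 1 ++ [n+1]) := by
  intro k
  induction k with
  | zero =>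
    intro _
    simp only [Nat.sub_zero, pow_zero, one_mul]
    rw [show (0:ℕ)+1 = 1 from rfl, pow_one]
    rw [decW_nil (a := n-1) (b := n) (by omega), List.append_nil]
    have s : bword n (decW j 1) * bword n (incW (j+1) n) =
        bword n (incW j n) * bword n (decW (j-1) 1) :=
      dec_inc (by omega) (by omega) (by omega) (by omega)
    simp only [bword_append, bword_singleton, mul_assoc]
    exact ctx s _
  | succ k ih =>
    intro hk
    have hkn : k ≤ n - j := by omega
    have hkey := key (n := n) (j := j) (q := n - k) hj (by omega) (by omega)
    rw [show n - k - 1 = n - (k+1) from by omega] at hkey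
    calc (bword n (decW j 1 ++ incW (j+1) n ++ [n+1]))^(k+1+1)
        = (bword n (decW j 1 ++ incW (j+1) n ++ [n+1]))^(k+1) *
            bword n (decW j 1 ++ incW (j+1) n ++ [n+1]) := by rw [pow_succ]
      _ = (bword n (decW j 1 ++ incW (j+1) n ++ [n+1]) * (bgen n n)⁻¹)^k *
            (bword n (incW j n ++ decW (n-1) (n-k) ++ decW (j-1) 1 ++ [n+1]) *
              bword n (decW j 1 ++ incW (j+1) n ++ [n+1])) := by
            rw [ih hkn, mul_assoc]
      _ = (bword n (decW j 1 ++ incW (j+1) n ++ [n+1]) * (bgen n n)⁻¹)^k *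
            ((bword n (decW j 1 ++ incW (j+1) n ++ [n+1]) * (bgen n n)⁻¹) *
              bword n (incW j n ++ decW (n-1) (n-(k+1)) ++ decW (j-1) 1 ++ [n+1])) := by
            rw [hkey]
      _ = (bword n (decW j 1 ++ incW (j+1) n ++ [n+1]) * (bgen n n)⁻¹)^(k+1) *
            bword n (incW j n ++ decW (n-1) (n-(k+1)) ++ decW (j-1) 1 ++ [n+1]) := by
            rw [pow_succ]; simp only [mul_assoc]

end ABG

/-- In `B(Ãₙ)`, with `y = σⱼ ⋯ σ₂σ₁ σ_{j+1} ⋯ σₙ₋₁σₙ a_{n+1}` (`2 ≤ j ≤ n - 1`) and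
`aₙ = σₙ a_{n+1} σₙ⁻¹`, one has
`y^{n-j+1} = (σⱼ ⋯ σ₂σ₁ σ_{j+1} ⋯ σₙ₋₁ aₙ)^{n-j} · σⱼσ_{j+1} ⋯ σₙ₋₁ · (σₙσₙ₋₁ ⋯ σ₂σ₁ a_{n+1})`. -/
theorem braid_power_formula_full (n j : ℕ) (hj : 2 ≤ j) (hjn : j ≤ n - 1) (hn : 2 ≤ n) :
    (bword n (decW j 1 ++ incW (j + 1) n ++ [n + 1])) ^ (n - j + 1) =
      (bword n (decW j 1 ++ incW (j + 1) (n - 1)) *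
        (bgen n n * bgen n (n + 1) * (bgen n n)⁻¹)) ^ (n - j) *
      bword n (incW j (n - 1)) *
      bword n (decW n 1 ++ [n + 1]) := by
  have hj1n : j + 1 ≤ n := by omega
  have hn3 : 3 ≤ n := by omega
  have hinv := ABG.invariant hj hj1n (n - j) (le_refl _)
  rw [show n - (n - j) = j from by omega] at hinv
  rw [hinv]
  -- bridge 1 : the base of the power
  have eIj1n : bword n (incW (j+1) n) =
      bword n (incW (j+1) (n-1)) * bgen n n := by
    have e1 : incW (j+1) n = incW (j+1) (n-1) ++ incW (n-1+1) n :=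
      ABG.incW_append (by omega) (by omega)
    rw [show n-1+1 = n by omega] at e1
    rw [e1, ABG.incW_single, ABG.bword_append, ABG.bword_singleton]
  have bridge1 : bword n (decW j 1 ++ incW (j + 1) (n - 1)) *
      (bgen n n * bgen n (n + 1) * (bgen n n)⁻¹) =
      bword n (decW j 1 ++ incW (j + 1) n ++ [n + 1]) * (bgen n n)⁻¹ := by
    simp only [ABG.bword_append, ABG.bword_singleton, mul_assoc]
    rw [eIj1n]
    simp only [mul_assoc]
  rw [bridge1]
  -- bridge 2 : the tail
  have bridge2 : bword n (incW j n ++ decW (n-1) j ++ decW (j-1) 1 ++ [n+1]) =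
      bword n (incW j (n - 1)) * bword n (decW n 1 ++ [n + 1]) := by
    rw [← ABG.bword_append]
    congr 1
    have e1 : incW j n = incW j (n-1) ++ incW (n-1+1) n :=
      ABG.incW_append (by omega) (by omega)
    rw [show n-1+1 = n by omega] at e1
    have e2 : decW n 1 = n :: decW (n-1) 1 := by
      have := ABG.decW_cons (a := n-1) (b := 1) (by omega)
      rwa [show n-1+1 = n by omega] at this
    have e3 : decW (n-1) 1 = decW (n-1) j ++ decW (j-1) 1 := by
      have := ABG.decW_append (a := n-1) (b := 1) (c := j-1) (by omega) (by omega)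
      rwa [show j-1+1 = j by omega] at this
    rw [e1, ABG.incW_single, e2, e3]
    simp
  rw [mul_assoc, ← bridge2]
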